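/- Let P be a poset, f : Pⁿ ⇀ P and g : Pⁿ ⇀ P partial functions such that whenever f(u₁,...,uₙ) and g(v₁,...,vₙ) are both defined and uᵢ ≤ vᵢ for all i, then f(u₁,...,uₙ) ≤ g(v₁,...,vₙ); assume also f is weakly monotone. Define on the poset OI(P) of order ideals: F(U₁,...,Uₙ) = downward closure of { f(u) : uᵢ ∈ Uᵢ, f(u) defined }, and G(U₁,...,Uₙ) = ↓g(x₁,...,xₙ) if Uᵢ = ↓xᵢ for all i and g(x₁,...,xₙ) is defined, and G(U₁,...,Uₙ) = F(U₁,...,Uₙ) otherwise. Then F is monotone and for all tuples of ideals with Uᵢ ⊆ Vᵢ we have F(U₁,...,Uₙ) ⊆ G(V₁,...,Vₙ). -/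
import Mathlib


/-- `idealImage f U` is the downward closure of the set of values of the partial
function `f` on tuples drawn from the sets `U i`. -/
def idealImage {n : ℕ} {P : Type} [Preorder P] (f : (Fin n → P) →. P)
    (U : Fin n → Set P) : Set P :=
  { x | ∃ u : Fin n → P, (∀ i, u i ∈ U i) ∧ ∃ h : (f u).Dom, x ≤ (f u).get h }

open Classical in
/-- The extension `G` of the partial function `g` to order ideals: on a tuple of
principal ideals `↓x₁, …, ↓xₙ` at which `g` is defined it returns `↓g(x)`,
and otherwise it falls back to `idealImage f`. -/
noncomputable def idealG {n : ℕ} {P : Type} [PartialOrder P]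
    (f g : (Fin n → P) →. P) (U : Fin n → Set P) : Set P :=
  if h : ∃ x : Fin n → P, (∀ i, U i = Set.Iic (x i)) ∧ (g x).Dom
  then Set.Iic ((g h.choose).get h.choose_spec.2)
  else idealImage f U

/-- Embeddability lemma for `Leq(f,g) ∧ Mon(f)`: if `f, g : Pⁿ ⇀ P` are partial
functions on a poset with `f(u) ≤ g(v)` whenever both are defined and `u ≤ v`
componentwise, and `f` is weakly monotone, then on order ideals `F = idealImage f`
is monotone and `F(U) ⊆ G(V)` whenever `Uᵢ ⊆ Vᵢ` for all `i`. -/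
theorem leq_mon_ideal_extension {n : ℕ} {P : Type} [PartialOrder P]
    (f g : (Fin n → P) →. P)
    (hleq : ∀ (u v : Fin n → P) (hu : (f u).Dom) (hv : (g v).Dom),
      (∀ i, u i ≤ v i) → (f u).get hu ≤ (g v).get hv)
    (hmono : ∀ (u v : Fin n → P) (hu : (f u).Dom) (hv : (f v).Dom),
      (∀ i, u i ≤ v i) → (f u).get hu ≤ (f v).get hv) :
    (∀ U V : Fin n → Set P, (∀ i, U i ⊆ V i) → idealImage f U ⊆ idealImage f V) ∧
    (∀ U V : Fin n → Set P, (∀ i, IsLowerSet (U i)) → (∀ i, IsLowerSet (V i)) →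
      (∀ i, U i ⊆ V i) → idealImage f U ⊆ idealG f g V) := by
  have mon : ∀ U V : Fin n → Set P, (∀ i, U i ⊆ V i) →
      idealImage f U ⊆ idealImage f V := by
    rintro U V hUV x ⟨u, hu, hd, hx⟩
    exact ⟨u, fun i => hUV i (hu i), hd, hx⟩
  refine ⟨mon, fun U V _ _ hUV x hx => ?_⟩
  unfold idealG
  split
  case isTrue h =>
    obtain ⟨u, hu, hd, hxle⟩ := hx
    have hspec := h.choose_spec
    refine le_trans hxle (hleq u h.choose hd hspec.2 fun i => ?_)
    have : u i ∈ V i := hUV i (hu i)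
    rw [hspec.1 i] at this
    exact this
  case isFalse h => exact mon U V hUV hx
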